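/- Let M be a symmetric n × n real matrix with eigenvalues λ₁, …, λₙ (listed with multiplicity, as given by the spectral theorem), and let q ≥ 1 be a natural number. Then the characteristic polynomial of the qn × qn matrix J_q ⊗ (M + Iₙ) − I_{qn}, where J_q is the q × q all-ones matrix, equals (X + 1)^{(q−1)n} · ∏_{i=1}^{n} (X − (q(λᵢ + 1) − 1)). In particular, its eigenvalues with multiplicity are q(λ₁ + 1) − 1, …, q(λₙ + 1) − 1 together with −1 repeated (q − 1)n times. -/

import Mathlib

open Matrix Kronecker Polynomial

section Aux

variable {m R : Type*} [Fintype m] [DecidableEq m] [CommRing R]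

lemma charpoly_conj_aux (A P Q : Matrix m m R) (h : Q * P = 1) :
    (Q * A * P).charpoly = A.charpoly := by
  have h' : (C : R →+* R[X]).mapMatrix Q * (C : R →+* R[X]).mapMatrix P = 1 := by
    rw [← _root_.map_mul, h]; exact RingHom.map_one _
  have key : charmatrix (Q * A * P) =
      (C : R →+* R[X]).mapMatrix Q * charmatrix A * (C : R →+* R[X]).mapMatrix P := by
    rw [charmatrix, charmatrix, Matrix.mul_sub, Matrix.sub_mul]
    congr 1
    · rw [mul_assoc, scalar_commute (X : R[X]) (Commute.all _) _, ← mul_assoc, h', one_mul]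
    · rw [_root_.map_mul, _root_.map_mul]
  have hdet : ((C : R →+* R[X]).mapMatrix Q).det * ((C : R →+* R[X]).mapMatrix P).det = 1 := by
    rw [← det_mul, h', det_one]
  rw [Matrix.charpoly, Matrix.charpoly, key, det_mul, det_mul]
  linear_combination A.charmatrix.det * hdet

end Aux

theorem stmt_13 {n q : ℕ} (hq : 1 ≤ q) (M : Matrix (Fin n) (Fin n) ℝ)
    (hM : M.IsHermitian) :
    ((Matrix.of fun _ _ => (1 : ℝ) : Matrix (Fin q) (Fin q) ℝ) ⊗ₖ (M + 1) - 1).charpoly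
      = (X + 1) ^ ((q - 1) * n)
        * ∏ i : Fin n, (X - C ((q : ℝ) * (hM.eigenvalues i + 1) - 1)) := by
  classical
  set z : Fin q := ⟨0, hq⟩ with hz
  set U : Matrix (Fin n) (Fin n) ℝ := (hM.eigenvectorUnitary : Matrix (Fin n) (Fin n) ℝ) with hU
  set D1 : Matrix (Fin n) (Fin n) ℝ :=
    Matrix.diagonal (fun i => hM.eigenvalues i + 1) with hD1
  have hUU : star U * U = 1 := by
    exact Matrix.mem_unitaryGroup_iff'.mp hM.eigenvectorUnitary.2
  have hDU : star U * (M + 1) * U = D1 := by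
    have h0 : star U * M * U = Matrix.diagonal hM.eigenvalues := by
      have := hM.conjStarAlgAut_star_eigenvectorUnitary
      simpa using this
    have : star U * (M + 1) * U = star U * M * U + star U * U := by
      noncomm_ring
    rw [this, h0, hUU, hD1]
    ext i j
    by_cases hij : i = j <;> simp [Matrix.diagonal, hij, Matrix.one_apply]
  -- the nilpotent part and the conjugating matrices for J
  set N : Matrix (Fin q) (Fin q) ℝ :=
    Matrix.of (fun a b => if b = z ∧ a ≠ z then (1 : ℝ) else 0) with hN
  set P : Matrix (Fin q) (Fin q) ℝ := 1 + N with hP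
  set Pi' : Matrix (Fin q) (Fin q) ℝ := 1 - N with hPi
  have hN2 : N * N = 0 := by
    ext a b
    rw [Matrix.mul_apply]
    apply Finset.sum_eq_zero
    intro c _
    by_cases hc : c = z <;> simp [hN, hc]
  have hPinvP : Pi' * P = 1 := by
    rw [hP, hPi, Matrix.sub_mul, Matrix.mul_add, Matrix.mul_add, hN2]
    noncomm_ring
  set J : Matrix (Fin q) (Fin q) ℝ := Matrix.of (fun _ _ => (1 : ℝ)) with hJ
  set T : Matrix (Fin q) (Fin q) ℝ :=
    Matrix.of (fun a b => if a = z then (if b = z then (q : ℝ) else 1) else 0) with hT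
  have hJP : Pi' * J * P = T := by
    have hrow : ∀ a d, (Pi' * J) a d = if a = z then 1 else 0 := by
      intro a d
      rw [Matrix.mul_apply]
      have : ∀ c, Pi' a c * J c d = Pi' a c := by intro c; simp [hJ]
      simp only [this]
      rw [hPi]
      simp only [Matrix.sub_apply, Matrix.one_apply, hN, Matrix.of_apply]
      rw [Finset.sum_sub_distrib]
      rw [Finset.sum_ite_eq Finset.univ a (fun _ => (1:ℝ))]
      by_cases ha : a = z
      · simp [ha]
      · simp [ha, Finset.sum_ite_eq]
    have hcol : ∀ b, (∑ d, P d b) = if b = z then (q : ℝ) else 1 := by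
      intro b
      rw [hP]
      simp only [Matrix.add_apply, Matrix.one_apply, hN, Matrix.of_apply]
      rw [Finset.sum_add_distrib]
      rw [Finset.sum_ite_eq' Finset.univ b (fun _ => (1:ℝ))]
      by_cases hb : b = z
      · have h1 : (∑ d : Fin q, if b = z ∧ d ≠ z then (1:ℝ) else 0)
            = ∑ d : Fin q, ((1:ℝ) - if d = z then 1 else 0) := by
          apply Finset.sum_congr rfl; intro d _
          by_cases hd : d = z <;> simp [hb, hd]
        rw [h1, Finset.sum_sub_distrib, Finset.sum_const,
          Finset.sum_ite_eq' Finset.univ z (fun _ => (1:ℝ))]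
        simp [hb, Nat.cast_sub hq]
      · simp [hb]
    ext a b
    rw [Matrix.mul_apply]
    simp only [hrow]
    by_cases ha : a = z
    · simp only [if_pos ha, one_mul]
      rw [hcol b]
      simp [hT, ha]
    · simp [ha, hT]
  -- conjugation
  have hQP : (Pi' ⊗ₖ (star U)) * (P ⊗ₖ U) = 1 := by
    rw [← Matrix.mul_kronecker_mul, hPinvP, hUU, Matrix.one_kronecker_one]
  have e1 : (Pi' ⊗ₖ (star U)) * (J ⊗ₖ (M + 1)) * (P ⊗ₖ U) = T ⊗ₖ D1 := by
    rw [← Matrix.mul_kronecker_mul, ← Matrix.mul_kronecker_mul, hJP, hDU]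
  have hconj : (Pi' ⊗ₖ (star U)) * ((J ⊗ₖ (M + 1)) - 1) * (P ⊗ₖ U)
      = (T ⊗ₖ (D1)) - 1 := by
    rw [Matrix.mul_sub, Matrix.mul_one, Matrix.sub_mul, e1, hQP]
  have hmain : ((J ⊗ₖ (M + 1)) - 1).charpoly = ((T ⊗ₖ D1) - 1).charpoly := by
    rw [← hconj, charpoly_conj_aux _ _ _ hQP]
  rw [show (Matrix.of fun _ _ => (1 : ℝ) : Matrix (Fin q) (Fin q) ℝ) ⊗ₖ (M + 1) - 1
      = (J ⊗ₖ (M + 1)) - 1 from rfl, hmain]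
  -- now compute the charpoly of the block-triangular matrix
  set A' : Matrix (Fin q × Fin n) (Fin q × Fin n) ℝ := (T ⊗ₖ D1) - 1 with hA'
  have htri : A'.BlockTriangular Prod.fst := by
    intro x y hxy
    have hx : x.1 ≠ z := by
      intro h
      rw [h] at hxy
      exact absurd hxy (by simp [hz, Fin.le_def, Fin.lt_def])
    have hxyne : x ≠ y := fun h => by rw [h] at hxy; exact lt_irrefl _ hxy
    simp [hA', Matrix.sub_apply, Matrix.kroneckerMap_apply, hT, hx,
      Matrix.one_apply_ne hxyne]
  have hblock : ∀ a : Fin q, (A'.toSquareBlock Prod.fst a).charpoly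
      = ∏ i : Fin n, (X - C (T a a * (hM.eigenvalues i + 1) - 1)) := by
    intro a
    set e : Fin n ≃ {x : Fin q × Fin n // x.1 = a} :=
      { toFun := fun i => ⟨(a, i), rfl⟩
        invFun := fun x => x.1.2
        left_inv := fun i => rfl
        right_inv := fun x => Subtype.ext (Prod.ext x.2.symm rfl) } with he
    have hbeq : A'.toSquareBlock Prod.fst a
        = Matrix.reindex e e (Matrix.diagonal
            (fun i => T a a * (hM.eigenvalues i + 1) - 1)) := by
      ext x y
      have hxa : x.1.1 = a := x.2
      have hya : y.1.1 = a := y.2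
      simp only [Matrix.toSquareBlock_def, Matrix.of_apply, Matrix.reindex_apply,
        Matrix.submatrix_apply, hA', Matrix.sub_apply, Matrix.kroneckerMap_apply]
      have hsymm : ∀ w : {x : Fin q × Fin n // x.1 = a}, e.symm w = (w : Fin q × Fin n).2 := fun w => rfl
      by_cases hij : x.1.2 = y.1.2
      · have hxy : x.1 = y.1 := Prod.ext (hxa.trans hya.symm) hij
        rw [hxy, Matrix.one_apply_eq, hsymm, hsymm, hij, Matrix.diagonal_apply_eq, hD1,
          Matrix.diagonal_apply_eq, hya]
      · have hxy : x.1 ≠ y.1 := fun h => hij (congrArg Prod.snd h)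
        have hee : e.symm x ≠ e.symm y := by
          rw [hsymm, hsymm]; exact hij
        rw [Matrix.diagonal_apply_ne _ hee]
        simp [hD1, Matrix.diagonal_apply_ne _ hij, Matrix.one_apply_ne hxy, hxa, hya]
    rw [hbeq, Matrix.charpoly_reindex]
    rw [Matrix.charpoly_of_upperTriangular _ (Matrix.blockTriangular_diagonal _)]
    apply Finset.prod_congr rfl
    intro i _
    simp
  have hcp : A'.charpoly = ∏ a : Fin q, (A'.toSquareBlock Prod.fst a).charpoly := by
    rw [Matrix.charpoly, Matrix.BlockTriangular.det_fintype htri.charmatrix]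
    exact Finset.prod_congr rfl fun a _ => by rw [← Matrix.charmatrix_toSquareBlock]; rfl
  rw [hcp]
  rw [← Finset.prod_erase_mul Finset.univ _ (Finset.mem_univ z)]
  have h1 : ∀ a ∈ Finset.univ.erase z, (A'.toSquareBlock Prod.fst a).charpoly
      = (X + 1) ^ n := by
    intro a ha
    rw [hblock a]
    have haz : a ≠ z := (Finset.mem_erase.mp ha).1
    have hTa : T a a = 0 := by simp [hT, haz]
    have hfac : ∀ i : Fin n, (X - C (T a a * (hM.eigenvalues i + 1) - 1)) = X + 1 := by
      intro i; rw [hTa]; simp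
    rw [Finset.prod_congr rfl (fun i _ => hfac i), Finset.prod_const, Finset.card_univ,
      Fintype.card_fin]
  rw [Finset.prod_congr rfl h1, Finset.prod_const, hblock z]
  have hTz : T z z = (q : ℝ) := by simp [hT]
  rw [hTz, ← pow_mul, Finset.card_erase_of_mem (Finset.mem_univ z), Finset.card_univ,
    Fintype.card_fin, Nat.mul_comm n (q - 1)]
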